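/- In the two-agent fixed–fixed model with arbitrary action times, if r1·r2 < 1, then x(t) converges as t → ∞ to ((1−r1)·k1 + r1·(1−r2)·k2)/(1 − r1·r2), and y(t) converges as t → ∞ to ((1−r2)·k2 + r2·(1−r1)·k1)/(1 − r1·r2). -/

import Mathlib

open Filter

private lemma persist_aux (r c : ℝ) (hr : 0 ≤ r) (T : Set ℕ) (w z : ℕ → ℝ)
    (hup : ∀ t, (t+1) ∈ T → w (t+1) = r * z t)
    (hkeep : ∀ t, (t+1) ∉ T → w (t+1) = w t)
    (N : ℕ) (hz : ∀ t, N ≤ t → |z t| ≤ c)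
    (s : ℕ) (hs : s ∈ T) (hsN : N + 1 ≤ s) :
    ∀ t, s ≤ t → |w t| ≤ r * c := by
  have hbase : |w s| ≤ r * c := by
    obtain ⟨m, rfl⟩ : ∃ m, s = m + 1 := ⟨s - 1, by omega⟩
    rw [hup m hs, abs_mul, abs_of_nonneg hr]
    exact mul_le_mul_of_nonneg_left (hz m (by omega)) hr
  intro t ht
  induction t, ht using Nat.le_induction with
  | base => exact hbase
  | succ t ht ih =>
    by_cases h : (t+1) ∈ T
    · rw [hup t h, abs_mul, abs_of_nonneg hr]
      exact mul_le_mul_of_nonneg_left (hz t (by omega)) hr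
    · rw [hkeep t h]; exact ih

/-- in the two-agent fixed–fixed model with arbitrary action times,
if r1·r2 < 1 then both action sequences converge, to the stated limits. -/
theorem fixed_fixed_convergence
    (k1 k2 r1 r2 : ℝ) (hk : k1 ≤ k2)
    (hr1 : r1 ∈ Set.Icc (0:ℝ) 1) (hr2 : r2 ∈ Set.Icc (0:ℝ) 1)
    (hr : r1 * r2 < 1)
    (T1 T2 : Set ℕ) (h01 : 0 ∈ T1) (h02 : 0 ∈ T2) (hU : T1 ∪ T2 = Set.univ)
    (hT1inf : T1.Infinite) (hT2inf : T2.Infinite)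
    (x y : ℕ → ℝ) (hx0 : x 0 = k1) (hy0 : y 0 = k2)
    (hxn : ∀ t : ℕ, (t + 1) ∉ T1 → x (t + 1) = x t)
    (hyn : ∀ t : ℕ, (t + 1) ∉ T2 → y (t + 1) = y t)
    (hxa : ∀ t : ℕ, (t + 1) ∈ T1 → x (t + 1) = (1 - r1) * k1 + r1 * y t)
    (hya : ∀ t : ℕ, (t + 1) ∈ T2 → y (t + 1) = (1 - r2) * k2 + r2 * x t) :
    Filter.Tendsto x Filter.atTop
      (nhds (((1 - r1) * k1 + r1 * (1 - r2) * k2) / (1 - r1 * r2))) ∧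
    Filter.Tendsto y Filter.atTop
      (nhds (((1 - r2) * k2 + r2 * (1 - r1) * k1) / (1 - r1 * r2))) := by
  classical
  obtain ⟨hr10, hr11⟩ := hr1
  obtain ⟨hr20, hr21⟩ := hr2
  have hden : (1 : ℝ) - r1 * r2 ≠ 0 := by nlinarith
  set Lx := ((1 - r1) * k1 + r1 * (1 - r2) * k2) / (1 - r1 * r2) with hLx
  set Ly := ((1 - r2) * k2 + r2 * (1 - r1) * k1) / (1 - r1 * r2) with hLy
  have hfx : Lx = (1 - r1) * k1 + r1 * Ly := by rw [hLx, hLy]; field_simp; ring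
  have hfy : Ly = (1 - r2) * k2 + r2 * Lx := by
    rw [hLx, hLy, div_eq_iff hden, add_mul, mul_assoc r2 (_ / _), div_mul_cancel₀ _ hden]; ring
  set u := fun t => x t - Lx with hudef
  set v := fun t => y t - Ly with hvdef
  have hu1 : ∀ t, (t+1) ∈ T1 → u (t+1) = r1 * v t := by
    intro t ht
    simp only [hudef, hvdef, hxa t ht]
    rw [hfx]; ring
  have hu0 : ∀ t, (t+1) ∉ T1 → u (t+1) = u t := by
    intro t ht; simp only [hudef, hxn t ht]
  have hv1 : ∀ t, (t+1) ∈ T2 → v (t+1) = r2 * u t := by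
    intro t ht
    simp only [hudef, hvdef, hya t ht]
    rw [hfy]; ring
  have hv0 : ∀ t, (t+1) ∉ T2 → v (t+1) = v t := by
    intro t ht; simp only [hvdef, hyn t ht]
  set M := fun t => max |u t| |v t| with hMdef
  have hM0 : 0 ≤ M 0 := le_trans (abs_nonneg _) (le_max_left _ _)
  have hManti : ∀ s t : ℕ, s ≤ t → M t ≤ M s := by
    intro s t h
    induction t, h using Nat.le_induction with
    | base => exact le_refl _
    | succ t ht ih =>
      refine le_trans ?_ ih
      have h1 : |u (t+1)| ≤ M t := by
        by_cases h : (t+1) ∈ T1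
        · rw [hu1 t h, abs_mul, abs_of_nonneg hr10]
          calc r1 * |v t| ≤ 1 * |v t| :=
                mul_le_mul_of_nonneg_right hr11 (abs_nonneg _)
            _ = |v t| := one_mul _
            _ ≤ M t := le_max_right _ _
        · rw [hu0 t h]; exact le_max_left _ _
      have h2 : |v (t+1)| ≤ M t := by
        by_cases h : (t+1) ∈ T2
        · rw [hv1 t h, abs_mul, abs_of_nonneg hr20]
          calc r2 * |u t| ≤ 1 * |u t| :=
                mul_le_mul_of_nonneg_right hr21 (abs_nonneg _)
            _ = |u t| := one_mul _
            _ ≤ M t := le_max_left _ _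
        · rw [hv0 t h]; exact le_max_right _ _
      exact max_le h1 h2
  have ha0 : 0 ≤ r1 * r2 := mul_nonneg hr10 hr20
  have key : ∀ n : ℕ, ∃ N : ℕ, ∀ t, N ≤ t →
      |u t| ≤ (r1*r2)^n * M 0 ∧ |v t| ≤ (r1*r2)^n * M 0 := by
    intro n
    induction n with
    | zero =>
      refine ⟨0, fun t _ => ?_⟩
      have hM : M t ≤ M 0 := hManti 0 t (Nat.zero_le t)
      constructor
      · simpa using le_trans (le_max_left _ _) hM
      · simpa using le_trans (le_max_right _ _) hM
    | succ n ih =>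
      obtain ⟨N, hN⟩ := ih
      obtain ⟨t2, ht2T, ht2⟩ := hT2inf.exists_gt N
      have hvB : ∀ t, t2 ≤ t → |v t| ≤ r2 * ((r1*r2)^n * M 0) :=
        persist_aux r2 _ hr20 T2 v u hv1 hv0 N (fun t ht => (hN t ht).1) t2 ht2T (by omega)
      obtain ⟨t1, ht1T, ht1⟩ := hT1inf.exists_gt t2
      have huB : ∀ t, t1 ≤ t → |u t| ≤ r1 * (r2 * ((r1*r2)^n * M 0)) :=
        persist_aux r1 _ hr10 T1 u v hu1 hu0 t2 hvB t1 ht1T (by omega)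
      obtain ⟨t3, ht3T, ht3⟩ := hT2inf.exists_gt t1
      have hvB2 : ∀ t, t3 ≤ t → |v t| ≤ r2 * (r1 * (r2 * ((r1*r2)^n * M 0))) :=
        persist_aux r2 _ hr20 T2 v u hv1 hv0 t1 huB t3 ht3T (by omega)
      have h0 : 0 ≤ (r1*r2)^(n+1) * M 0 := mul_nonneg (pow_nonneg ha0 _) hM0
      refine ⟨t3, fun t ht => ⟨?_, ?_⟩⟩
      · calc |u t| ≤ r1 * (r2 * ((r1*r2)^n * M 0)) := huB t (by omega)
          _ = (r1*r2)^(n+1) * M 0 := by ring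
      · calc |v t| ≤ r2 * (r1 * (r2 * ((r1*r2)^n * M 0))) := hvB2 t ht
          _ = r2 * ((r1*r2)^(n+1) * M 0) := by ring
          _ ≤ 1 * ((r1*r2)^(n+1) * M 0) := mul_le_mul_of_nonneg_right hr21 h0
          _ = (r1*r2)^(n+1) * M 0 := one_mul _
  have htend : Tendsto (fun n => (r1*r2)^n * M 0) atTop (nhds 0) := by
    simpa using (tendsto_pow_atTop_nhds_zero_of_lt_one ha0 hr).mul_const (M 0)
  have hlim : ∀ w : ℕ → ℝ, (∀ n : ℕ, ∃ N : ℕ, ∀ t, N ≤ t → |w t| ≤ (r1*r2)^n * M 0) →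
      Tendsto w atTop (nhds 0) := by
    intro w hw
    rw [Metric.tendsto_atTop]
    intro ε hε
    obtain ⟨n, hn⟩ := (htend.eventually (gt_mem_nhds hε)).exists
    obtain ⟨N, hN⟩ := hw n
    exact ⟨N, fun t ht => by
      rw [Real.dist_eq, sub_zero]; exact lt_of_le_of_lt (hN t ht) hn⟩
  have hux : Tendsto u atTop (nhds 0) :=
    hlim u (fun n => (key n).imp fun N h t ht => (h t ht).1)
  have hvy : Tendsto v atTop (nhds 0) :=
    hlim v (fun n => (key n).imp fun N h t ht => (h t ht).2)
  constructor
  · have := hux.add_const Lx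
    simpa [hudef] using this
  · have := hvy.add_const Ly
    simpa [hvdef] using this
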